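/- arXiv:2502.16714 — 2 statements merged into one kernel-verified Lean document; each statement's English description precedes it below -/
import Mathlib

section
/- Let G be a graph with edge b and vertices s, t. Construct G' by subdividing every edge of G except b, where subdividing an edge e of weight w(e) creates two edges each of weight w(e)/2. Then an s-t-path in G' between original vertices of G has odd length if and only if it contains the edge b; consequently, the minimum weight of an s-t-path in G containing b equals the minimum weight of an odd-length s-t-path in G'. -/
/-- The graph obtained from `G` by subdividing every edge not in `F`:
edges in `F` survive between original vertices (`Sum.inl`), while every
edge `e ∉ F` is replaced by a path of length 2 through the new vertex
`Sum.inr e`. -/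
def subdivideOutside {V : Type} (G : SimpleGraph V) (F : Set (Sym2 V)) :
    SimpleGraph (V ⊕ Sym2 V) where
  Adj x y :=
    match x, y with
    | .inl u, .inl v => G.Adj u v ∧ s(u, v) ∈ F
    | .inl u, .inr e => e ∈ G.edgeSet ∧ e ∉ F ∧ u ∈ e
    | .inr e, .inl u => e ∈ G.edgeSet ∧ e ∉ F ∧ u ∈ e
    | .inr _, .inr _ => False
  symm := by
    constructor
    rintro (u | e) (v | f) h
    · obtain ⟨h1, h2⟩ := h
      exact ⟨h1.symm, by rwa [Sym2.eq_swap]⟩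
    · exact h
    · exact h
    · exact h
  loopless := by
    constructor
    rintro (u | e) h
    · exact G.loopless.irrefl u h.1
    · exact h

/-- The weight of a walk: the sum of the weights of its edges. -/
def walkWeight {V : Type} {W : Type} [AddCommMonoid W] {G : SimpleGraph V}
    (w : Sym2 V → W) {u v : V} (p : G.Walk u v) : W := (p.edges.map w).sum

namespace Stmt4Aux

open SimpleGraph Walk Sum

def sideN {V : Type} : V ⊕ Sym2 V → ℕ := Sum.elim (fun _ => 0) (fun _ => 1)

variable {V : Type} {G : SimpleGraph V} {bs bt : V}

@[simp] lemma sideN_inl (u : V) : sideN (Sum.inl u : V ⊕ Sym2 V) = 0 := rfl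
@[simp] lemma sideN_inr (e : Sym2 V) : sideN (Sum.inr e : V ⊕ Sym2 V) = 1 := rfl

lemma map_inl_eq {u x : V} (h : s(u, x) = s(bs, bt)) :
    s((Sum.inl u : V ⊕ Sym2 V), Sum.inl x) = s(Sum.inl bs, Sum.inl bt) := by
  have := congrArg (Sym2.map (Sum.inl : V → V ⊕ Sym2 V)) h
  simpa using this

lemma parity {x y : V ⊕ Sym2 V}
    (q : (subdivideOutside G {s(bs, bt)}).Walk x y) (hq : q.IsPath) :
    Odd (q.length + sideN x + sideN y) ↔
      s(Sum.inl bs, Sum.inl bt) ∈ q.edges := by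
  induction q with
  | nil =>
    rename_i z
    rcases z with u | e <;> simp [sideN, Nat.odd_iff]
  | cons h q ih =>
    rename_i a c d
    have hih := ih hq.of_cons
    rcases a with u | e <;> rcases c with v | f
    · -- kept edge
      have hedge : s((Sum.inl u : V ⊕ Sym2 V), Sum.inl v) = s(Sum.inl bs, Sum.inl bt) :=
        map_inl_eq h.2
      have hnotin : s((Sum.inl bs : V ⊕ Sym2 V), Sum.inl bt) ∉ q.edges := by
        have hnd := hq.isTrail.edges_nodup
        rw [Walk.edges_cons, List.nodup_cons, hedge] at hnd
        exact hnd.1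
      simp only [sideN_inl, add_zero, Walk.length_cons, Walk.edges_cons,
        List.mem_cons] at hih ⊢
      rw [Nat.odd_iff] at hih ⊢
      constructor
      · intro _
        exact Or.inl hedge.symm
      · intro _
        have h2 : (q.length + sideN d) % 2 ≠ 1 := fun hh => hnotin (hih.mp hh)
        omega
    · have hne : (s(Sum.inl u, Sum.inr f) : Sym2 (V ⊕ Sym2 V)) ≠ s(Sum.inl bs, Sum.inl bt) := by
        simp [Sym2.eq_iff]
      simp only [sideN_inl, sideN_inr, add_zero, Walk.length_cons,
        Walk.edges_cons, List.mem_cons] at hih ⊢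
      rw [Nat.odd_iff] at hih ⊢
      constructor
      · intro hx
        exact Or.inr (hih.mp (by omega))
      · rintro (hx | hx)
        · exact absurd hx.symm hne
        · have := hih.mpr hx
          omega
    · have hne : (s(Sum.inr e, Sum.inl v) : Sym2 (V ⊕ Sym2 V)) ≠ s(Sum.inl bs, Sum.inl bt) := by
        simp [Sym2.eq_iff]
      simp only [sideN_inl, sideN_inr, add_zero, Walk.length_cons,
        Walk.edges_cons, List.mem_cons] at hih ⊢
      rw [Nat.odd_iff] at hih ⊢
      constructor
      · intro hx
        exact Or.inr (hih.mp (by omega))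
      · rintro (hx | hx)
        · exact absurd hx.symm hne
        · have := hih.mpr hx
          omega
    · exact (False.elim h)

variable {w : Sym2 V → ℝ} {w' : Sym2 (V ⊕ Sym2 V) → ℝ}

lemma lift_exists
    (hkeep : w' s(Sum.inl bs, Sum.inl bt) = w s(bs, bt))
    (hsplit : ∀ e ∈ G.edgeSet, e ≠ s(bs, bt) → ∀ x : V, x ∈ e →
      w' s(Sum.inl x, Sum.inr e) = w e / 2) :
    ∀ {u v : V} (p : G.Walk u v), p.IsPath →
    ∃ q : (subdivideOutside G {s(bs, bt)}).Walk (Sum.inl u) (Sum.inl v),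
      q.IsPath ∧
      (∀ z, z ∈ q.support →
        (∃ y, z = Sum.inl y ∧ y ∈ p.support) ∨ (∃ e, z = Sum.inr e ∧ e ∈ p.edges)) ∧
      walkWeight w' q = walkWeight w p ∧
      (s(bs, bt) ∈ p.edges → s(Sum.inl bs, Sum.inl bt) ∈ q.edges) := by
  intro u v p
  induction p with
  | nil =>
    intro _
    refine ⟨.nil, Walk.IsPath.nil, ?_, by simp [walkWeight], by simp⟩
    intro z hz
    rw [Walk.support_nil, List.mem_singleton] at hz
    exact Or.inl ⟨_, hz, by simp⟩
  | cons h p ih =>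
    rename_i a c d
    intro hp
    rw [Walk.cons_isPath_iff] at hp
    obtain ⟨q, hq, hsupp, hwq, hbm⟩ := ih hp.1
    by_cases hbe : s(a, c) = s(bs, bt)
    · -- kept edge
      have a1 : (subdivideOutside G {s(bs, bt)}).Adj (Sum.inl a) (Sum.inl c) :=
        ⟨h, hbe⟩
      have hedge : s((Sum.inl a : V ⊕ Sym2 V), Sum.inl c) = s(Sum.inl bs, Sum.inl bt) :=
        map_inl_eq hbe
      refine ⟨.cons a1 q, ?_, ?_, ?_, ?_⟩
      · rw [Walk.cons_isPath_iff]
        refine ⟨hq, fun hmem => ?_⟩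
        rcases hsupp _ hmem with ⟨y, hy, hys⟩ | ⟨e, he, _⟩
        · rw [Sum.inl.injEq] at hy
          exact hp.2 (hy ▸ hys)
        · simp at he
      · intro z hz
        rw [Walk.support_cons, List.mem_cons] at hz
        rcases hz with rfl | hz
        · exact Or.inl ⟨a, rfl, Walk.start_mem_support _⟩
        · rcases hsupp _ hz with ⟨y, hy, hys⟩ | ⟨e, he, hes⟩
          · exact Or.inl ⟨y, hy, by rw [Walk.support_cons]; exact List.mem_cons_of_mem _ hys⟩
          · exact Or.inr ⟨e, he, by rw [Walk.edges_cons]; exact List.mem_cons_of_mem _ hes⟩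
      · simp only [walkWeight, Walk.edges_cons, List.map_cons, List.sum_cons]
        simp only [walkWeight] at hwq
        rw [hedge, hkeep, hwq, ← hbe]
      · intro _
        rw [Walk.edges_cons]
        rw [hedge]
        exact List.mem_cons_self
    · -- subdivided edge
      have hes : s(a, c) ∈ G.edgeSet := h
      have a1 : (subdivideOutside G {s(bs, bt)}).Adj (Sum.inl a) (Sum.inr s(a, c)) :=
        ⟨hes, by simpa using hbe, Sym2.mem_mk_left a c⟩
      have a2 : (subdivideOutside G {s(bs, bt)}).Adj (Sum.inr s(a, c)) (Sum.inl c) :=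
        ⟨hes, by simpa using hbe, Sym2.mem_mk_right a c⟩
      refine ⟨.cons a1 (.cons a2 q), ?_, ?_, ?_, ?_⟩
      · rw [Walk.cons_isPath_iff, Walk.cons_isPath_iff]
        refine ⟨⟨hq, fun hmem => ?_⟩, fun hmem => ?_⟩
        · rcases hsupp _ hmem with ⟨y, hy, hys⟩ | ⟨e, he, hes'⟩
          · simp at hy
          · rw [Sum.inr.injEq] at he
            exact hp.2 (Walk.fst_mem_support_of_mem_edges p (he ▸ hes'))
        · rw [Walk.support_cons, List.mem_cons] at hmem
          rcases hmem with hy | hmem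
          · simp at hy
          · rcases hsupp _ hmem with ⟨y, hy, hys⟩ | ⟨e, he, _⟩
            · rw [Sum.inl.injEq] at hy
              exact hp.2 (hy ▸ hys)
            · simp at he
      · intro z hz
        rw [Walk.support_cons, Walk.support_cons, List.mem_cons, List.mem_cons] at hz
        rcases hz with rfl | rfl | hz
        · exact Or.inl ⟨a, rfl, Walk.start_mem_support _⟩
        · exact Or.inr ⟨s(a, c), rfl, by rw [Walk.edges_cons]; exact List.mem_cons_self⟩
        · rcases hsupp _ hz with ⟨y, hy, hys⟩ | ⟨e, he, hes'⟩
          · exact Or.inl ⟨y, hy, by rw [Walk.support_cons]; exact List.mem_cons_of_mem _ hys⟩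
          · exact Or.inr ⟨e, he, by rw [Walk.edges_cons]; exact List.mem_cons_of_mem _ hes'⟩
      · simp only [walkWeight, Walk.edges_cons, List.map_cons, List.sum_cons]
        simp only [walkWeight] at hwq
        have h1 := hsplit s(a, c) hes hbe a (Sym2.mem_mk_left a c)
        have h2 : w' s(Sum.inr s(a, c), Sum.inl c) = w s(a, c) / 2 := by
          rw [Sym2.eq_swap]
          exact hsplit s(a, c) hes hbe c (Sym2.mem_mk_right a c)
        rw [h1, h2, hwq]
        ring
      · intro hmem
        rw [Walk.edges_cons, List.mem_cons] at hmem
        rcases hmem with hx | hmem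
        · exact absurd hx.symm hbe
        · rw [Walk.edges_cons, Walk.edges_cons]
          exact List.mem_cons_of_mem _ (List.mem_cons_of_mem _ (hbm hmem))


lemma proj_exists
    (hkeep : w' s(Sum.inl bs, Sum.inl bt) = w s(bs, bt))
    (hsplit : ∀ e ∈ G.edgeSet, e ≠ s(bs, bt) → ∀ x : V, x ∈ e →
      w' s(Sum.inl x, Sum.inr e) = w e / 2) {t : V} :
    ∀ (n : ℕ) {u : V} (q : (subdivideOutside G {s(bs, bt)}).Walk (Sum.inl u) (Sum.inl t)),
      q.length ≤ n → q.IsPath →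
    ∃ p : G.Walk u t, p.IsPath ∧
      (∀ z, z ∈ p.support → Sum.inl z ∈ q.support) ∧
      walkWeight w p = walkWeight w' q ∧
      (s(Sum.inl bs, Sum.inl bt) ∈ q.edges → s(bs, bt) ∈ p.edges) := by
  intro n
  induction n with
  | zero =>
    intro u q hlen hq
    cases q with
    | nil =>
      exact ⟨.nil, Walk.IsPath.nil, by simp, by simp [walkWeight], by simp⟩
    | cons h q' =>
      simp [Walk.length_cons] at hlen
  | succ n ih =>
    intro u q hlen hq
    cases q with
    | nil =>
      exact ⟨.nil, Walk.IsPath.nil, by simp, by simp [walkWeight], by simp⟩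
    | cons h q' =>
      rename_i c
      rcases c with x | e
      · -- kept edge first
        have hbe : s(u, x) = s(bs, bt) := h.2
        rw [Walk.length_cons] at hlen
        obtain ⟨p, hp, hsupp, hwp, hbm⟩ := ih q' (by omega) hq.of_cons
        rw [Walk.cons_isPath_iff] at hq
        refine ⟨.cons h.1 p, ?_, ?_, ?_, ?_⟩
        · rw [Walk.cons_isPath_iff]
          exact ⟨hp, fun hm => hq.2 (hsupp _ hm)⟩
        · intro z hz
          rw [Walk.support_cons, List.mem_cons] at hz ⊢
          rcases hz with rfl | hz
          · exact Or.inl rfl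
          · exact Or.inr (hsupp _ hz)
        · simp only [walkWeight, Walk.edges_cons, List.map_cons, List.sum_cons]
          simp only [walkWeight] at hwp
          rw [map_inl_eq hbe, hkeep, hwp, hbe]
        · intro _
          rw [Walk.edges_cons, ← hbe]
          exact List.mem_cons_self
      · -- subdivided edge first
        cases q' with
        | cons h2 q'' =>
          rename_i c2
          rcases c2 with x | f
          · rw [Walk.length_cons, Walk.length_cons] at hlen
            obtain ⟨p, hp, hsupp, hwp, hbm⟩ := ih q'' (by omega) hq.of_cons.of_cons
            have hux : u ≠ x := by
              intro huxe
              subst huxe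
              have := hq.support_nodup
              rw [Walk.support_cons, Walk.support_cons, List.nodup_cons] at this
              exact this.1 (List.mem_cons_of_mem _ (Walk.start_mem_support q''))
            have he : e = s(u, x) :=
              (Sym2.mem_and_mem_iff hux).mp ⟨h.2.2, h2.2.2⟩
            have hadj : G.Adj u x := by
              rw [← SimpleGraph.mem_edgeSet, ← he]
              exact h.1
            have hne : e ≠ s(bs, bt) := by simpa using h.2.1
            refine ⟨.cons hadj p, ?_, ?_, ?_, ?_⟩
            · rw [Walk.cons_isPath_iff]
              refine ⟨hp, fun hm => ?_⟩
              have hmem := hsupp _ hm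
              have := hq.support_nodup
              rw [Walk.support_cons, Walk.support_cons, List.nodup_cons] at this
              exact this.1 (List.mem_cons_of_mem _ hmem)
            · intro z hz
              rw [Walk.support_cons, List.mem_cons] at hz
              rw [Walk.support_cons, Walk.support_cons, List.mem_cons, List.mem_cons]
              rcases hz with rfl | hz
              · exact Or.inl rfl
              · exact Or.inr (Or.inr (hsupp _ hz))
            · simp only [walkWeight, Walk.edges_cons, List.map_cons, List.sum_cons]
              simp only [walkWeight] at hwp
              have h1 := hsplit e h.1 hne u h.2.2
              have h2' : w' s(Sum.inr e, Sum.inl x) = w e / 2 := by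
                rw [Sym2.eq_swap]
                exact hsplit e h.1 hne x h2.2.2
              rw [h1, h2', hwp, he]
              ring
            · intro hmem
              rw [Walk.edges_cons, Walk.edges_cons, List.mem_cons, List.mem_cons] at hmem
              rcases hmem with hx | hx | hmem
              · exact absurd hx (by simp [Sym2.eq_iff])
              · exact absurd hx (by simp [Sym2.eq_iff])
              · rw [Walk.edges_cons, List.mem_cons]
                exact Or.inr (hbm hmem)
          · exact (False.elim h2)

end Stmt4Aux

/-- Let `G'` be obtained from `G` by subdividing every edge
except `b`, each subdivision edge getting weight `w(e)/2` (expressed by the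
hypotheses on the weight function `w'` of `G'`).  Then an `s`-`t`-path in
`G'` (between original vertices of `G`) has odd length iff it contains the
edge `b`; consequently, the minimum weight of an `s`-`t`-path in `G`
containing `b` equals the minimum weight of an odd-length `s`-`t`-path in
`G'`. -/
theorem stmt_4 {V : Type} (G : SimpleGraph V) (s t : V) (bs bt : V)
    (hb : s(bs, bt) ∈ G.edgeSet)
    (w : Sym2 V → ℝ) (hw : ∀ e, 0 ≤ w e)
    (w' : Sym2 (V ⊕ Sym2 V) → ℝ)
    (hkeep : w' s(Sum.inl bs, Sum.inl bt) = w s(bs, bt))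
    (hsplit : ∀ e ∈ G.edgeSet, e ≠ s(bs, bt) → ∀ x : V, x ∈ e →
      w' s(Sum.inl x, Sum.inr e) = w e / 2) :
    (∀ q : (subdivideOutside G {s(bs, bt)}).Walk (Sum.inl s) (Sum.inl t),
      q.IsPath → (Odd q.length ↔ s(Sum.inl bs, Sum.inl bt) ∈ q.edges)) ∧
    sInf {x : ℝ | ∃ p : G.Walk s t, p.IsPath ∧ s(bs, bt) ∈ p.edges ∧
        walkWeight w p = x} =
      sInf {x : ℝ | ∃ q : (subdivideOutside G {s(bs, bt)}).Walk
          (Sum.inl s) (Sum.inl t),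
        q.IsPath ∧ Odd q.length ∧ walkWeight w' q = x} := by
  have hpar : ∀ q : (subdivideOutside G {s(bs, bt)}).Walk (Sum.inl s) (Sum.inl t),
      q.IsPath → (Odd q.length ↔ s(Sum.inl bs, Sum.inl bt) ∈ q.edges) := by
    intro q hq
    have := Stmt4Aux.parity q hq
    simpa using this
  refine ⟨hpar, ?_⟩
  have hsets : {x : ℝ | ∃ p : G.Walk s t, p.IsPath ∧ s(bs, bt) ∈ p.edges ∧
        walkWeight w p = x}
      = {x : ℝ | ∃ q : (subdivideOutside G {s(bs, bt)}).Walk (Sum.inl s) (Sum.inl t),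
        q.IsPath ∧ Odd q.length ∧ walkWeight w' q = x} := by
    ext x
    simp only [Set.mem_setOf_eq]
    constructor
    · rintro ⟨p, hp, hbp, rfl⟩
      obtain ⟨q, hq, -, hwq, hbm⟩ := Stmt4Aux.lift_exists hkeep hsplit p hp
      exact ⟨q, hq, (hpar q hq).mpr (hbm hbp), hwq⟩
    · rintro ⟨q, hq, hodd, rfl⟩
      obtain ⟨p, hp, -, hwp, hbm⟩ :=
        Stmt4Aux.proj_exists hkeep hsplit q.length q le_rfl hq
      exact ⟨p, hp, hbm ((hpar q hq).mp hodd), hwp⟩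
  rw [hsets]
end

section
/- Let G be a graph and M = {(v, v') : v ∈ V(G)} a perfect matching between G and a disjoint mirror copy of G. Construct G' as two disjoint copies of G plus all matching edges vv', then delete s' and t. Then G has an even-length s-t-path if and only if G' has an M-alternating s-t'-path, i.e., a path from s to t' whose edges alternately lie outside and inside M, starting and ending with non-matching edges. -/
/-- Derigs' auxiliary graph `G'`: two disjoint copies of `G` (`Sum.inl` is
the original, `Sum.inr` the mirror copy), plus all matching edges `v v'`,
with the vertices `s' = Sum.inr s` and `t = Sum.inl t` deleted (made
isolated). -/
def mirrorGraph {V : Type} (G : SimpleGraph V) (s t : V) :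
    SimpleGraph (V ⊕ V) where
  Adj x y :=
    x ≠ Sum.inr s ∧ x ≠ Sum.inl t ∧ y ≠ Sum.inr s ∧ y ≠ Sum.inl t ∧
      (match x, y with
       | .inl u, .inl v => G.Adj u v
       | .inr u, .inr v => G.Adj u v
       | .inl u, .inr v => u = v
       | .inr u, .inl v => u = v)
  symm := by
    refine ⟨?_⟩
    rintro (u | u) (v | v) ⟨h1, h2, h3, h4, h5⟩
    · exact ⟨h3, h4, h1, h2, h5.symm⟩
    · exact ⟨h3, h4, h1, h2, h5.symm⟩
    · exact ⟨h3, h4, h1, h2, h5.symm⟩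
    · exact ⟨h3, h4, h1, h2, h5.symm⟩
  loopless := by
    refine ⟨?_⟩
    rintro (u | u) ⟨_, _, _, _, h⟩ <;> exact G.irrefl h

/-- The perfect matching `M = {vv' : v ∈ V(G)}` between the two copies. -/
def mirrorMatching (V : Type) : Set (Sym2 (V ⊕ V)) :=
  {e | ∃ v : V, e = s(Sum.inl v, Sum.inr v)}

open SimpleGraph Sum

variable {V : Type} {G : SimpleGraph V} {s t : V}

def AltL (V : Type) (l : List (Sym2 (V ⊕ V))) : Prop :=
  ∀ (i : ℕ) (hi : i < l.length), (l.get ⟨i, hi⟩ ∈ mirrorMatching V ↔ Odd i)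

lemma altL_nil : AltL V [] := by intro i hi; simp at hi

lemma altL_singleton {a : Sym2 (V ⊕ V)} : AltL V [a] ↔ a ∉ mirrorMatching V := by
  constructor
  · intro h ha
    have := (h 0 (by simp)).mp ha
    simp [Nat.odd_iff] at this
  · intro h i hi
    match i with
    | 0 => simpa [Nat.odd_iff] using h
    | (i+1) => simp at hi

lemma altL_cons₂ {a b : Sym2 (V ⊕ V)} {l : List (Sym2 (V ⊕ V))} :
    AltL V (a :: b :: l) ↔ (a ∉ mirrorMatching V ∧ b ∈ mirrorMatching V ∧ AltL V l) := by
  constructor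
  · intro h
    refine ⟨fun ha => by simpa [Nat.odd_iff] using (h 0 (by simp)).mp ha,
      (h 1 (by simp)).mpr (by simp), fun i hi => ?_⟩
    have := h (i + 2) (by simpa using Nat.add_lt_add_right hi 2)
    simpa [Nat.odd_add] using this
  · rintro ⟨ha, hb, hl⟩ i hi
    match i with
    | 0 => simpa [Nat.odd_iff] using ha
    | 1 => simp [hb]
    | (i + 2) =>
      have := hl i (by simpa using Nat.lt_of_add_lt_add_right hi)
      simpa [Nat.odd_add] using this

lemma not_mem_M_inl {u v : V} : s(Sum.inl u, Sum.inl v) ∉ mirrorMatching V := by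
  rintro ⟨w, hw⟩
  rcases Sym2.eq_iff.mp hw with ⟨h1, h2⟩ | ⟨h1, h2⟩ <;> simp_all

lemma not_mem_M_inr {u v : V} : s(Sum.inr u, Sum.inr v) ∉ mirrorMatching V := by
  rintro ⟨w, hw⟩
  rcases Sym2.eq_iff.mp hw with ⟨h1, h2⟩ | ⟨h1, h2⟩ <;> simp_all

lemma mem_M_match {u : V} : s(Sum.inl u, Sum.inr u) ∈ mirrorMatching V := ⟨u, rfl⟩

lemma adj_inl {u v : V} (h : G.Adj u v) (hu : u ≠ t) (hv : v ≠ t) :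
    (mirrorGraph G s t).Adj (inl u) (inl v) := by
  exact ⟨by simp, by simp [hu], by simp, by simp [hv], h⟩

lemma adj_inr {u v : V} (h : G.Adj u v) (hu : u ≠ s) (hv : v ≠ s) :
    (mirrorGraph G s t).Adj (inr u) (inr v) := by
  exact ⟨by simp [hu], by simp, by simp [hv], by simp, h⟩

lemma adj_match {u : V} (hus : u ≠ s) (hut : u ≠ t) :
    (mirrorGraph G s t).Adj (inl u) (inr u) := by
  exact ⟨by simp, by simp [hut], by simp [hus], by simp, rfl⟩

lemma support_avoid {x y : V ⊕ V} (q : (mirrorGraph G s t).Walk x y) :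
    ∀ z ∈ q.support, z = y ∨ (z ≠ Sum.inr s ∧ z ≠ Sum.inl t) := by
  induction q with
  | nil => intro z hz; simp at hz; exact Or.inl hz
  | cons h p ih =>
    intro z hz
    rw [Walk.support_cons] at hz
    rcases List.mem_cons.mp hz with rfl | hz
    · exact Or.inr ⟨h.1, h.2.1⟩
    · exact ih z hz

lemma support_avoid' {x : V ⊕ V} (hst : s ≠ t) (q : (mirrorGraph G s t).Walk x (inr t)) :
    ∀ z ∈ q.support, z ≠ Sum.inr s ∧ z ≠ Sum.inl t := by
  intro z hz
  rcases support_avoid q z hz with rfl | h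
  · exact ⟨by simp [Ne.symm hst], by simp⟩
  · exact h

/-- Lemma A : every vertex of an alternating path other than the endpoints is
covered by a matching edge of the path. -/
lemma covered (n : ℕ) : ∀ {x y : V ⊕ V} (q : (mirrorGraph G s t).Walk x y),
    q.length = n → AltL V q.edges → ∀ z ∈ q.support, z ≠ x → z ≠ y →
    ∃ v : V, s(Sum.inl v, Sum.inr v) ∈ q.edges ∧ (z = Sum.inl v ∨ z = Sum.inr v) := by
  induction n using Nat.strong_induction_on with
  | _ n ih =>
    intro x y q hn halt z hz hzx hzy
    match q with
    | .nil => simp at hz; exact absurd hz hzx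
    | .cons h .nil =>
      simp [Walk.support_cons] at hz
      rcases hz with rfl | rfl
      · exact absurd rfl hzx
      · exact absurd rfl hzy
    | .cons (v := w) h1 (.cons (v := w2) h2 q'') =>
      rw [Walk.edges_cons, Walk.edges_cons] at halt
      rcases altL_cons₂.mp halt with ⟨he1, he2, halt'⟩
      obtain ⟨v, hv⟩ := he2
      have hww : (w = Sum.inl v ∧ w2 = Sum.inr v) ∨ (w = Sum.inr v ∧ w2 = Sum.inl v) :=
        Sym2.eq_iff.mp hv
      have hmem2 : s(Sum.inl v, Sum.inr v) ∈ (Walk.cons h1 (Walk.cons h2 q'')).edges := by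
        rw [Walk.edges_cons, Walk.edges_cons, ← hv]; simp
      rw [Walk.support_cons, Walk.support_cons] at hz
      rcases List.mem_cons.mp hz with rfl | hz
      · exact absurd rfl hzx
      rcases List.mem_cons.mp hz with rfl | hz
      · refine ⟨v, hmem2, ?_⟩
        rcases hww with ⟨h', _⟩ | ⟨h', _⟩
        · exact Or.inl h'
        · exact Or.inr h'
      by_cases hzw2 : z = w2
      · subst hzw2
        refine ⟨v, hmem2, ?_⟩
        rcases hww with ⟨_, h'⟩ | ⟨_, h'⟩
        · exact Or.inr h'
        · exact Or.inl h'
      · have hlen : q''.length < n := by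
          simp [Walk.length_cons] at hn; omega
        obtain ⟨v', hv', hz'⟩ := ih q''.length hlen q'' rfl halt' z hz hzw2 hzy
        refine ⟨v', ?_, hz'⟩
        rw [Walk.edges_cons, Walk.edges_cons]
        simp [hv']

lemma mem_M_match' {u : V} : s(Sum.inr u, Sum.inl u) ∈ mirrorMatching V := ⟨u, Sym2.eq_swap⟩

lemma start_ne_end {a b : V} {p : G.Walk a b} (hp : p.IsPath) (h0 : 0 < p.length) : a ≠ b := by
  match p with
  | .nil => simp at h0
  | .cons h p' =>
    have := (Walk.cons_isPath_iff h p').mp hp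
    intro hab; subst hab
    exact this.2 p'.end_mem_support

lemma forward (hst : s ≠ t) (n : ℕ) : ∀ {a : V} (p : G.Walk a t), p.length = n →
    p.IsPath → s ∉ p.support.tail → 0 < p.length → Even p.length →
    ∃ q : (mirrorGraph G s t).Walk (Sum.inl a) (Sum.inr t), q.IsPath ∧ Odd q.length ∧
      AltL V q.edges ∧
      ∀ z ∈ q.support, z = Sum.inl a ∨ ∃ v ∈ p.support.tail, z = Sum.inl v ∨ z = Sum.inr v := by
  induction n using Nat.strong_induction_on with
  | _ n ih =>
    intro a p hn hp hs h0 hev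
    cases p with
    | nil => simp at h0
    | cons h p₁ =>
      rename_i b
      cases p₁ with
      | nil => simp [Nat.even_iff] at hev
      | cons h' rest =>
        rename_i c
        have hp2 : (Walk.cons h' rest).IsPath := hp.of_cons
        have hp3 : rest.IsPath := hp2.of_cons
        have hans : a ∉ (Walk.cons h' rest).support := ((Walk.cons_isPath_iff _ _).mp hp).2
        have hbns : b ∉ rest.support := ((Walk.cons_isPath_iff _ _).mp hp2).2
        have hat : a ≠ t := fun he => hans (he ▸ (Walk.cons h' rest).end_mem_support)
        have hbt : b ≠ t := fun he => hbns (he ▸ rest.end_mem_support)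
        have hstail : s ∉ (Walk.cons h' rest).support := by
          simpa [Walk.support_cons] using hs
        have hbs : b ≠ s := by
          intro he; subst he; exact hstail (Walk.start_mem_support _)
        have hsrest : s ∉ rest.support := by
          simp [Walk.support_cons] at hstail
          exact fun hc => hstail.2 hc
        have hcs : c ≠ s := fun he => hsrest (he ▸ rest.start_mem_support)
        have hab : a ≠ b := h.ne
        have hac : a ≠ c := by
          intro he; subst he; exact hans (by simp [Walk.support_cons])
        have hbc : b ≠ c := h'.ne
        cases rest with
        | nil =>
          refine ⟨Walk.cons (adj_inl h hat hbt) (Walk.cons (adj_match hbs hbt)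
            (Walk.cons (adj_inr h' hbs (Ne.symm hst)) Walk.nil)), ?_, ?_, ?_, ?_⟩
          · simp [Walk.isPath_def, Walk.support_cons, hab, hat, hbt]
          · simp [Walk.length_cons]
            decide
          · simp only [Walk.edges_cons, Walk.edges_nil]
            exact altL_cons₂.mpr ⟨not_mem_M_inl, mem_M_match, altL_singleton.mpr not_mem_M_inr⟩
          · intro z hz
            simp [Walk.support_cons] at hz
            rcases hz with rfl | rfl | rfl | rfl
            · exact Or.inl rfl
            · exact Or.inr ⟨b, by simp [Walk.support_cons], Or.inl rfl⟩
            · exact Or.inr ⟨b, by simp [Walk.support_cons], Or.inr rfl⟩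
            · exact Or.inr ⟨t, by simp [Walk.support_cons], Or.inr rfl⟩
        | cons h'' rest' =>
          rename_i d
          set r : G.Walk c t := Walk.cons h'' rest' with hr
          have hct : c ≠ t := by
            refine start_ne_end hp3 ?_
            simp [hr, Walk.length_cons]
          have hcr : c ∉ r.support.tail := by
            have := (Walk.isPath_def _).mp hp3
            rw [r.support_eq_cons] at this
            exact (List.nodup_cons.mp this).1
          have hr0 : 0 < r.length := by simp [hr, Walk.length_cons]
          have hrev : Even r.length := by
            have hlen : (Walk.cons h (Walk.cons h' r)).length = r.length + 2 := by
              simp [Walk.length_cons]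
            rw [hlen] at hev
            rcases hev with ⟨k, hk⟩
            exact ⟨k - 1, by omega⟩
          have hsr : s ∉ r.support.tail := by
            intro hc; exact hsrest (List.mem_of_mem_tail hc)
          have hlt : r.length < n := by
            simp [Walk.length_cons] at hn ⊢; omega
          obtain ⟨q', hq'path, hq'odd, hq'alt, hq'sup⟩ :=
            ih r.length hlt r rfl hp3 hsr hr0 hrev
          have hq'sup' : ∀ z ∈ q'.support,
              (z = Sum.inl c ∨ z = Sum.inr c) ∨ ∃ v ∈ r.support.tail, z = Sum.inl v ∨ z = Sum.inr v := by
            intro z hz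
            rcases hq'sup z hz with rfl | hz'
            · exact Or.inl (Or.inl rfl)
            · exact Or.inr hz'
          have hnotc : Sum.inr c ∉ q'.support := by
            intro hc
            rcases hq'sup (Sum.inr c) hc with he | ⟨v, hv, he | he⟩
            · exact absurd he (by simp)
            · exact absurd he (by simp)
            · obtain rfl : c = v := Sum.inr_injective he
              exact hcr hv
          have hnotof : ∀ w : V, w ∉ r.support → Sum.inl w ∉ q'.support ∧ Sum.inr w ∉ q'.support := by
            intro w hw
            constructor <;> intro hc <;> rcases hq'sup _ hc with he | ⟨v, hv, he | he⟩ <;>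
              simp at he <;> first
              | (subst he; exact hw (r.start_mem_support))
              | (subst he; exact hw (List.mem_of_mem_tail hv))
          have hbr : b ∉ r.support := hbns
          have har : a ∉ r.support := by
            intro hc; exact hans (by simp [Walk.support_cons, hc])
          refine ⟨Walk.cons (adj_inl h hat hbt) (Walk.cons (adj_match hbs hbt)
            (Walk.cons (adj_inr h' hbs hcs) (Walk.cons (adj_match hcs hct).symm q'))), ?_, ?_, ?_, ?_⟩
          · rw [Walk.cons_isPath_iff, Walk.cons_isPath_iff, Walk.cons_isPath_iff,
              Walk.cons_isPath_iff]
            refine ⟨⟨⟨⟨hq'path, hnotc⟩, ?_⟩, ?_⟩, ?_⟩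
            · simp [Walk.support_cons, hbc, (hnotof b hbr).2]
            · simp [Walk.support_cons, hbc, (hnotof b hbr).1]
            · simp [Walk.support_cons, hab, hac, (hnotof a har).1]
          · simp only [Walk.length_cons]
            rcases hq'odd with ⟨k, hk⟩
            exact ⟨k + 2, by omega⟩
          · simp only [Walk.edges_cons]
            exact altL_cons₂.mpr ⟨not_mem_M_inl, mem_M_match,
              altL_cons₂.mpr ⟨not_mem_M_inr, mem_M_match', hq'alt⟩⟩
          · intro z hz
            have hsubtail : ∀ v, v ∈ r.support → v ∈ (Walk.cons h (Walk.cons h' r)).support.tail := by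
              intro v hv; simp [Walk.support_cons]; tauto
            have hbtail : b ∈ (Walk.cons h (Walk.cons h' r)).support.tail := by
              simp [Walk.support_cons]
            simp only [Walk.support_cons, List.mem_cons] at hz
            rcases hz with rfl | rfl | rfl | rfl | hz
            · exact Or.inl rfl
            · exact Or.inr ⟨b, hbtail, Or.inl rfl⟩
            · exact Or.inr ⟨b, hbtail, Or.inr rfl⟩
            · exact Or.inr ⟨c, hsubtail c r.start_mem_support, Or.inr rfl⟩
            · rcases hq'sup z hz with rfl | ⟨v, hv, he⟩
              · exact Or.inr ⟨c, hsubtail c r.start_mem_support, Or.inl rfl⟩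
              · exact Or.inr ⟨v, hsubtail v (List.mem_of_mem_tail hv), he⟩

lemma backward (hst : s ≠ t) (n : ℕ) : ∀ {x : V ⊕ V} (q : (mirrorGraph G s t).Walk x (Sum.inr t)),
    q.length = n → q.IsPath → AltL V q.edges → 0 < q.length →
    ∃ p : G.Walk (Sum.elim id id x) t, p.IsPath ∧ (Even p.length ↔ x.isLeft = true) ∧
      ∀ v ∈ p.support, Sum.inl v ∈ q.support ∨ Sum.inr v ∈ q.support := by
  induction n using Nat.strong_induction_on with
  | _ n ih =>
    intro x q hn hq halt h0
    cases q with
    | nil => simp at h0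
    | cons h1 q1 =>
      rename_i w
      cases q1 with
      | nil =>
        cases x with
        | inl u =>
          obtain ⟨_, hx2, _, _, hm⟩ := h1
          exact absurd (congrArg Sum.inl hm) hx2
        | inr u =>
          obtain ⟨_, _, _, _, hm⟩ := id h1
          refine ⟨Walk.cons hm Walk.nil, ?_, ?_, ?_⟩
          · simp [Walk.isPath_def, Walk.support_cons, hm.ne]
          · simp [Nat.even_iff]
          · intro v hv
            simp [Walk.support_cons] at hv
            rcases hv with rfl | rfl
            · exact Or.inr (by simp [Walk.support_cons])
            · exact Or.inr (by simp [Walk.support_cons])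
      | cons h2 q' =>
        rename_i w2
        rw [Walk.edges_cons, Walk.edges_cons] at halt
        obtain ⟨he1, he2, halt'⟩ := altL_cons₂.mp halt
        have hq2 : (Walk.cons h2 q').IsPath := hq.of_cons
        have hq' : q'.IsPath := hq2.of_cons
        have hxq' : x ∉ q'.support := by
          have := ((Walk.cons_isPath_iff _ _).mp hq).2
          simp [Walk.support_cons] at this
          exact this.2
        have hwq' : w ∉ q'.support := ((Walk.cons_isPath_iff _ _).mp hq2).2
        have hq'sub : ∀ z ∈ q'.support, z ∈ (Walk.cons h1 (Walk.cons h2 q')).support := by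
          intro z hz; simp [Walk.support_cons]; tauto
        cases x with
        | inl u =>
          cases w with
          | inr v =>
            obtain ⟨_, _, _, _, hm⟩ := id h1
            subst hm
            exact absurd mem_M_match he1
          | inl v =>
            obtain ⟨hx1, hx2, hw1, hw2, hG⟩ := id h1
            obtain ⟨v0, hv0⟩ := he2
            rcases Sym2.eq_iff.mp hv0 with ⟨ha, hb⟩ | ⟨ha, hb⟩
            swap
            · exact absurd ha (by simp)
            have hw2v : w2 = Sum.inr v := by
              rw [hb, congrArg Sum.inr (Sum.inl_injective ha).symm]
            subst hw2v
            have hvt : v ≠ t := fun he => hw2 (congrArg Sum.inl he)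
            have hut : u ≠ t := fun he => hx2 (congrArg Sum.inl he)
            have hq'0 : 0 < q'.length := by
              rcases Nat.eq_zero_or_pos q'.length with h00 | h00
              · have : Sum.inr v = Sum.inr t :=
                  (Walk.nil_iff_length_eq.mpr h00 : q'.Nil).eq
                exact absurd (Sum.inr_injective this) hvt
              · exact h00
            have hlt : q'.length < n := by
              simp [Walk.length_cons] at hn; omega
            obtain ⟨p', hp'path, hp'par, hp'sup⟩ :=
              ih q'.length hlt q' rfl hq' halt' hq'0
            have hu_not : u ∉ p'.support := by
              intro hu
              rcases hp'sup u hu with hc | hc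
              · exact hxq' hc
              · have hzmem : Sum.inr u ∈ (Walk.cons h1 (Walk.cons h2 q')).support := hq'sub _ hc
                obtain ⟨v1, hv1e, hv1z⟩ := covered (Walk.cons h1 (Walk.cons h2 q')).length
                  (Walk.cons h1 (Walk.cons h2 q')) rfl halt (Sum.inr u) hzmem
                  (by simp) (by simp [hut])
                have hv1u : v1 = u := by
                  rcases hv1z with hz | hz
                  · exact absurd hz (by simp)
                  · exact (Sum.inr_injective hz).symm
                rw [hv1u] at hv1e
                rw [Walk.edges_cons, Walk.edges_cons] at hv1e
                rcases List.mem_cons.mp hv1e with he | hrest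
                · exact he1 (he ▸ mem_M_match)
                rcases List.mem_cons.mp hrest with he | hrest
                · rcases Sym2.eq_iff.mp he with ⟨ha', _⟩ | ⟨_, hb'⟩
                  · obtain rfl : u = v := by injection ha'
                    exact hG.ne rfl
                  · exact absurd hb' (by simp)
                · exact hxq' (Walk.fst_mem_support_of_mem_edges q' hrest)
            refine ⟨Walk.cons hG p', ?_, ?_, ?_⟩
            · exact (Walk.cons_isPath_iff _ _).mpr ⟨hp'path, hu_not⟩
            · have hne : ¬ Even p'.length := fun h => by simpa using hp'par.mp h
              show Even (p'.length + 1) ↔ (inl u : V ⊕ V).isLeft = true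
              simp [Walk.length_cons, Nat.even_add_one, hne]
              exact Nat.not_even_iff_odd.mp hne
            · intro v' hv'
              change v' ∈ u :: p'.support at hv'
              simp only [List.mem_cons] at hv'
              rcases hv' with rfl | hv'
              · exact Or.inl (by simp [Walk.support_cons])
              · rcases hp'sup v' hv' with hc | hc
                · exact Or.inl (hq'sub _ hc)
                · exact Or.inr (hq'sub _ hc)
        | inr u =>
          cases w with
          | inl v =>
            obtain ⟨_, _, _, _, hm⟩ := id h1
            subst hm
            exact absurd mem_M_match' he1
          | inr v =>
            obtain ⟨hx1, hx2, hw1, hw2, hG⟩ := id h1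
            obtain ⟨v0, hv0⟩ := he2
            rcases Sym2.eq_iff.mp hv0 with ⟨ha, hb⟩ | ⟨ha, hb⟩
            · exact absurd ha (by simp)
            have hw2v : w2 = Sum.inl v := by
              rw [hb, congrArg Sum.inl (Sum.inr_injective ha).symm]
            subst hw2v
            have hq'0 : 0 < q'.length := by
              rcases Nat.eq_zero_or_pos q'.length with h00 | h00
              · have : Sum.inl v = Sum.inr t :=
                  (Walk.nil_iff_length_eq.mpr h00 : q'.Nil).eq
                exact absurd this (by simp)
              · exact h00
            have hlt : q'.length < n := by
              simp [Walk.length_cons] at hn; omega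
            obtain ⟨p', hp'path, hp'par, hp'sup⟩ :=
              ih q'.length hlt q' rfl hq' halt' hq'0
            have hu_not : u ∉ p'.support := by
              intro hu
              rcases hp'sup u hu with hc | hc
              · have hzmem : Sum.inl u ∈ (Walk.cons h1 (Walk.cons h2 q')).support := hq'sub _ hc
                have hut : u ≠ t := by
                  have := (support_avoid' hst _ _ hzmem).2
                  exact fun he => this (congrArg Sum.inl he)
                obtain ⟨v1, hv1e, hv1z⟩ := covered (Walk.cons h1 (Walk.cons h2 q')).length
                  (Walk.cons h1 (Walk.cons h2 q')) rfl halt (Sum.inl u) hzmem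
                  (by simp) (by simp)
                have hv1u : v1 = u := by
                  rcases hv1z with hz | hz
                  · exact (Sum.inl_injective hz).symm
                  · exact absurd hz (by simp)
                rw [hv1u] at hv1e
                rw [Walk.edges_cons, Walk.edges_cons] at hv1e
                rcases List.mem_cons.mp hv1e with he | hrest
                · exact he1 (he ▸ mem_M_match)
                rcases List.mem_cons.mp hrest with he | hrest
                · rcases Sym2.eq_iff.mp he with ⟨ha', _⟩ | ⟨hb', _⟩
                  · exact absurd ha' (by simp)
                  · obtain rfl : u = v := by injection hb'
                    exact hG.ne rfl
                · exact hxq' (Walk.snd_mem_support_of_mem_edges q' hrest)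
              · exact hxq' hc
            refine ⟨Walk.cons hG p', ?_, ?_, ?_⟩
            · exact (Walk.cons_isPath_iff _ _).mpr ⟨hp'path, hu_not⟩
            · have he : Even p'.length := hp'par.mpr (by simp)
              show Even (p'.length + 1) ↔ (inr u : V ⊕ V).isLeft = true
              simp [Walk.length_cons, Nat.even_add_one, he]
              exact he
            · intro v' hv'
              change v' ∈ u :: p'.support at hv'
              simp only [List.mem_cons] at hv'
              rcases hv' with rfl | hv'
              · exact Or.inr (by simp [Walk.support_cons])
              · rcases hp'sup v' hv' with hc | hc
                · exact Or.inl (hq'sub _ hc)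
                · exact Or.inr (hq'sub _ hc)


/-- `G` has an even-length `s`-`t`-path iff `G'` has an
`M`-alternating `s`-`t'`-path, i.e. a path from `s` to `t'` of odd length
whose edges at odd (0-based) positions are exactly the matching edges, so
that it starts and ends with non-matching edges. -/
theorem stmt_10 {V : Type} (G : SimpleGraph V) (s t : V) (hst : s ≠ t) :
    (∃ p : G.Walk s t, p.IsPath ∧ Even p.length) ↔
      (∃ q : (mirrorGraph G s t).Walk (Sum.inl s) (Sum.inr t),
        q.IsPath ∧ Odd q.length ∧
          ∀ (i : ℕ) (hi : i < q.edges.length),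
            (q.edges.get ⟨i, hi⟩ ∈ mirrorMatching V ↔ Odd i)) := by
  constructor
  · rintro ⟨p, hp, hev⟩
    have h0 : 0 < p.length := by
      rcases Nat.eq_zero_or_pos p.length with h00 | h00
      · exact absurd (Walk.nil_iff_length_eq.mpr h00 : p.Nil).eq hst
      · exact h00
    have hs : s ∉ p.support.tail := by
      have := (Walk.isPath_def p).mp hp
      rw [p.support_eq_cons] at this
      exact (List.nodup_cons.mp this).1
    obtain ⟨q, h1, h2, h3, _⟩ := forward hst p.length p rfl hp hs h0 hev
    exact ⟨q, h1, h2, h3⟩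
  · rintro ⟨q, hq, hodd, halt⟩
    have h0 : 0 < q.length := by
      rcases hodd with ⟨k, hk⟩; omega
    obtain ⟨p, h1, h2, _⟩ := backward hst q.length q rfl hq halt h0
    exact ⟨p, h1, h2.mpr (by simp)⟩
end
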